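/- arXiv:2505.00696 — 6 statements merged into one kernel-verified Lean document; each statement's English description precedes it below -/
import Mathlib

section
/- Let q = p^e be a prime power, F an imaginary quadratic field, and α ∈ O_F with α·conj(α) = q and p ∤ (α + conj(α)). Then for every integer r > 0 and every algebraic integer β all of whose complex absolute values equal q^{w/2} for some integer w with 0 ≤ w < r, the product α^r·β is not a power of q. In particular, for all s ≥ 2, q^s / α^{2s−1} is not an algebraic integer. -/
/-- A Weil `q`-integer of weight `w`: an algebraic integer all of whose complex
conjugates (roots of its minimal polynomial over `ℚ`) have absolute value `q ^ (w/2)`. -/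
def IsWeilInt (q : ℕ) (w : ℕ) (β : ℂ) : Prop :=
  IsIntegral ℤ β ∧
    ∀ γ : ℂ, Polynomial.aeval γ (minpoly ℚ β) = 0 → ‖γ‖ = (q : ℝ) ^ ((w : ℝ) / 2)

private def lucasU (t qz : ℤ) : ℕ → ℤ
  | 0 => 2
  | 1 => t
  | (n+2) => t * lucasU t qz (n+1) - qz * lucasU t qz n

private lemma lucasU_eq (A B : ℂ) (t qz : ℤ) (ht : A + B = (t : ℂ)) (hq : A * B = (qz : ℂ)) :
    ∀ n, (lucasU t qz n : ℂ) = A ^ n + B ^ n := by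
  have key : ∀ n, (lucasU t qz n : ℂ) = A ^ n + B ^ n ∧
      (lucasU t qz (n+1) : ℂ) = A ^ (n+1) + B ^ (n+1) := by
    intro n
    induction n with
    | zero =>
      constructor
      · simp [lucasU]; norm_num
      · simpa [lucasU] using ht.symm
    | succ n ih =>
      refine ⟨ih.2, ?_⟩
      show ((lucasU t qz (n+2) : ℤ) : ℂ) = _
      rw [lucasU]
      push_cast
      rw [ih.1, ih.2, ← ht, ← hq]
      ring
  exact fun n => (key n).1

private lemma lucasU_mod (t qz pz : ℤ) (hpq : pz ∣ qz) :
    ∀ n, pz ∣ lucasU t qz (n+1) - t ^ (n+1) := by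
  intro n
  induction n with
  | zero => simp [lucasU]
  | succ n ih =>
    have h : lucasU t qz (n+2) - t ^ (n+2) =
        t * (lucasU t qz (n+1) - t ^ (n+1)) - qz * lucasU t qz n := by
      rw [lucasU]; ring
    rw [h]
    exact dvd_sub (Dvd.dvd.mul_left ih t) (Dvd.dvd.mul_right hpq _)

/-- With `α` a non-real algebraic integer satisfying `α * conj α = q = p ^ e`
and `p ∤ Tr(α) = α + conj α` (the Frobenius eigenvalue of an ordinary elliptic curve,
generating an imaginary quadratic field), for every `r > 0` and every Weil `q`-integer `β`
of weight `w` with `0 ≤ w < r`, the product `α ^ r * β` is not a power of `q`; in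
particular for `s ≥ 2`, `q ^ s / α ^ (2s - 1)` is not an algebraic integer. -/
theorem stmt1 (p e : ℕ) (hp : p.Prime) (he : 1 ≤ e) (q : ℕ) (hq : q = p ^ e)
    (α : ℂ) (hint : IsIntegral ℤ α) (himag : α.im ≠ 0)
    (hnorm : α * (starRingEnd ℂ) α = q)
    (htr : ∃ t : ℤ, α + (starRingEnd ℂ) α = (t : ℂ) ∧ ¬ ((p : ℤ) ∣ t)) :
    (∀ r : ℕ, 0 < r → ∀ w : ℕ, w < r → ∀ β : ℂ, IsWeilInt q w β →
      ∀ s : ℕ, α ^ r * β ≠ (q : ℂ) ^ s) ∧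
    (∀ s : ℕ, 2 ≤ s → ¬ IsIntegral ℤ ((q : ℂ) ^ s / α ^ (2 * s - 1))) := by
  obtain ⟨t, ht, hpt⟩ := htr
  set B : ℂ := (starRingEnd ℂ) α with hB
  have hq2 : 2 ≤ q := by
    rw [hq]
    calc 2 ≤ p := hp.two_le
    _ ≤ p ^ e := Nat.le_self_pow (by omega) p
  have hqC : ((q : ℂ)) ≠ 0 := Nat.cast_ne_zero.mpr (by omega)
  have hα0 : α ≠ 0 := by
    intro h
    rw [h, zero_mul] at hnorm
    exact hqC hnorm.symm
  have hpq : (p : ℤ) ∣ (q : ℤ) := by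
    rw [hq]; push_cast
    exact dvd_pow_self _ (by omega)
  -- core lemma
  have core : ∀ r s : ℕ, s < r → ∀ β : ℂ, IsIntegral ℤ β → α ^ r * β = (q : ℂ) ^ s → False := by
    intro r s hsr β hβint hαβ
    have hU := lucasU_eq α B t (q : ℤ) ht (by exact_mod_cast hnorm)
    have hcβ : IsIntegral ℤ ((starRingEnd ℂ) β) :=
      hβint.map (starRingEnd ℂ).toIntAlgHom
    have hx : IsIntegral ℤ (β + (starRingEnd ℂ) β) := hβint.add hcβ
    have hconj : B ^ r * (starRingEnd ℂ) β = (q : ℂ) ^ s := by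
      have := congrArg (starRingEnd ℂ) hαβ
      simpa [map_mul, map_pow] using this
    -- key identity : (β + conj β) * q^(r-s) = u r
    have hkey : (β + (starRingEnd ℂ) β) * (q : ℂ) ^ (r - s) = (lucasU t (q : ℤ) r : ℂ) := by
      have h1 : (β + (starRingEnd ℂ) β) * (q : ℂ) ^ r
          = (q : ℂ) ^ s * (lucasU t (q : ℤ) r : ℂ) := by
        rw [hU r]
        calc (β + (starRingEnd ℂ) β) * (q : ℂ) ^ r
            = (β + (starRingEnd ℂ) β) * (α * B) ^ r := by rw [hnorm]
          _ = (α ^ r * β) * B ^ r + (B ^ r * (starRingEnd ℂ) β) * α ^ r := by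
              rw [mul_pow]; ring
          _ = (q : ℂ) ^ s * (α ^ r + B ^ r) := by rw [hαβ, hconj]; ring
      have h3 : (q : ℂ) ^ r = (q : ℂ) ^ s * (q : ℂ) ^ (r - s) := by
        rw [← pow_add]
        congr 1
        omega
      rw [h3] at h1
      refine mul_left_cancel₀ (pow_ne_zero s hqC) ?_
      rw [← h1]; ring
    -- descend to ℚ
    set ξ : ℚ := (lucasU t (q : ℤ) r : ℚ) / (q : ℚ) ^ (r - s) with hξ
    have hqQ : ((q : ℚ)) ^ (r - s) ≠ 0 := by positivity
    have hξC : ((ξ : ℚ) : ℂ) = β + (starRingEnd ℂ) β := by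
      rw [hξ]
      push_cast
      rw [eq_comm, eq_div_iff (pow_ne_zero _ hqC)]
      exact hkey
    have hξint : IsIntegral ℤ ξ := by
      have h : IsIntegral ℤ ((Rat.castHom ℂ).toIntAlgHom ξ) := by
        simpa [hξC] using hx
      exact (isIntegral_algHom_iff (Rat.castHom ℂ).toIntAlgHom
        (Rat.castHom ℂ).injective).mp h
    obtain ⟨m, hm⟩ := IsIntegrallyClosed.isIntegral_iff.mp hξint
    have hmQ : (m : ℚ) = ξ := by exact_mod_cast hm
    have hmdvd : ((q : ℤ)) ^ (r - s) ∣ lucasU t (q : ℤ) r := by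
      refine ⟨m, ?_⟩
      have h5 : ((lucasU t (q : ℤ) r : ℤ) : ℚ) = (((q : ℤ) ^ (r - s) * m : ℤ) : ℚ) := by
        push_cast
        rw [hmQ, hξ]
        field_simp
      exact_mod_cast h5
    have hpdvd : (p : ℤ) ∣ lucasU t (q : ℤ) r :=
      hpq.trans ((dvd_pow_self (q : ℤ) (by omega)).trans hmdvd)
    have hr1 : r = (r - 1) + 1 := by omega
    have hmod := lucasU_mod t (q : ℤ) (p : ℤ) hpq (r - 1)
    rw [← hr1] at hmod
    have hpt' : (p : ℤ) ∣ t ^ r := by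
      have h6 := dvd_sub hpdvd hmod
      simpa using h6
    exact hpt ((Nat.prime_iff_prime_int.mp hp).dvd_of_dvd_pow hpt')
  constructor
  · intro r hr w hwr β hβ s hαβ
    have habsα : ‖α‖ ^ 2 = (q : ℝ) := by
      have h : ((Complex.normSq α : ℝ) : ℂ) = (q : ℂ) := by rw [← Complex.mul_conj]; exact hnorm
      rw [Complex.sq_norm]
      exact_mod_cast h
    have habsβ : ‖β‖ ^ 2 = (q : ℝ) ^ w := by
      have h := hβ.2 β (minpoly.aeval ℚ β)
      rw [h, ← Real.rpow_natCast ((q : ℝ) ^ ((w : ℝ)/2)) 2, ← Real.rpow_mul (by positivity)]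
      norm_num
    have hpow : (q : ℝ) ^ (r + w) = (q : ℝ) ^ (2 * s) := by
      have h := congrArg (fun z => ‖z‖ ^ 2) hαβ
      simp only [norm_mul, norm_pow, mul_pow, Complex.norm_natCast] at h
      rw [show (‖α‖ ^ r) ^ 2 = (‖α‖ ^ 2) ^ r by ring, habsα, habsβ] at h
      calc (q : ℝ) ^ (r + w) = (q : ℝ) ^ r * (q : ℝ) ^ w := pow_add _ _ _
        _ = ((q : ℝ) ^ s) ^ 2 := h
        _ = (q : ℝ) ^ (2 * s) := by ring
    have hrw : r + w = 2 * s := by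
      have h : (q : ℕ) ^ (r + w) = q ^ (2 * s) := by exact_mod_cast hpow
      exact Nat.pow_right_injective hq2 h
    exact core r s (by omega) β hβ.1 hαβ
  · intro s hs hβint
    have hne : α ^ (2 * s - 1) ≠ 0 := pow_ne_zero _ hα0
    refine core (2 * s - 1) s (by omega) _ hβint ?_
    field_simp
end

section
/- Let q = p^e be a prime power, F an imaginary quadratic field, and α ∈ O_F with α·conj(α) = q and p ∤ (α + conj(α)). Then for any Weil q-integer β of weight one with β ∉ {α, conj(α)}, and any integers r, s, we have α^r·β ≠ q^s. -/
lemma seq_lemma (α : ℂ) (t : ℤ) (q : ℕ) (ht : α + (starRingEnd ℂ) α = (t : ℂ))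
    (hnorm : α * (starRingEnd ℂ) α = (q : ℂ)) (p : ℕ) (hpq : (q : ZMod p) = 0) :
    ∀ n : ℕ, ∃ k : ℤ, α ^ (n + 1) + ((starRingEnd ℂ) α) ^ (n + 1) = (k : ℂ) ∧
      (k : ZMod p) = (t : ZMod p) ^ (n + 1) := by
  set c := (starRingEnd ℂ) α with hc
  have H : ∀ n : ℕ,
      (∃ k : ℤ, α ^ (n + 1) + c ^ (n + 1) = (k : ℂ) ∧ (k : ZMod p) = (t : ZMod p) ^ (n + 1)) ∧
      (∃ k : ℤ, α ^ (n + 2) + c ^ (n + 2) = (k : ℂ) ∧ (k : ZMod p) = (t : ZMod p) ^ (n + 2)) := by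
    intro n
    induction n with
    | zero =>
      constructor
      · exact ⟨t, by simpa using ht, by simp⟩
      · refine ⟨t ^ 2 - 2 * q, ?_, ?_⟩
        · push_cast
          linear_combination (α + c + (t : ℂ)) * ht - 2 * hnorm
        · push_cast [hpq]; ring
    | succ n ih =>
      obtain ⟨⟨k1, h1, h1p⟩, ⟨k2, h2, h2p⟩⟩ := ih
      refine ⟨⟨k2, h2, h2p⟩, ⟨t * k2 - q * k1, ?_, ?_⟩⟩
      · push_cast
        linear_combination (α + c) * h2 - (α * c) * h1 + (k2 : ℂ) * ht - (k1 : ℂ) * hnorm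
      · push_cast [hpq, h1p, h2p]; ring
  exact fun n => (H n).1

lemma key_lemma (p e q : ℕ) (hp : p.Prime) (he : 1 ≤ e) (hq : q = p ^ e)
    (α : ℂ) (t : ℤ) (ht : α + (starRingEnd ℂ) α = (t : ℂ)) (hpt : ¬ ((p : ℤ) ∣ t))
    (hnorm : α * (starRingEnd ℂ) α = (q : ℂ))
    (β : ℂ) (hβint : IsIntegral ℤ β) (u : ℕ) (hu : 1 ≤ u)
    (hsum : (β + (starRingEnd ℂ) β) * (q : ℂ) ^ u
      = α ^ (2 * u + 1) + ((starRingEnd ℂ) α) ^ (2 * u + 1)) : False := by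
  haveI : Fact p.Prime := ⟨hp⟩
  have hq0 : q ≠ 0 := by
    rw [hq]; exact pow_ne_zero _ hp.pos.ne'
  have hpq : (q : ZMod p) = 0 := by
    rw [hq]; push_cast [ZMod.natCast_self]
    exact zero_pow (by omega)
  obtain ⟨k, hk, hkp⟩ := seq_lemma α t q ht hnorm p hpq (2 * u)
  have hkc : (β + (starRingEnd ℂ) β) * (q : ℂ) ^ u = (k : ℂ) := by
    rw [hsum]; exact hk
  have hconjβ : IsIntegral ℤ ((starRingEnd ℂ) β) :=
    hβint.map ((starRingEnd ℂ).toIntAlgHom)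
  have hT : IsIntegral ℤ (β + (starRingEnd ℂ) β) := hβint.add hconjβ
  set x : ℚ := (k : ℚ) / (q : ℚ) ^ u with hx
  have hqQ : ((q : ℚ)) ^ u ≠ 0 := pow_ne_zero _ (by exact_mod_cast hq0)
  have hxval : ((x : ℚ) : ℂ) = β + (starRingEnd ℂ) β := by
    rw [hx]
    push_cast
    rw [div_eq_iff (by exact_mod_cast pow_ne_zero u (show (q:ℂ) ≠ 0 by exact_mod_cast hq0))]
    linear_combination -hkc
  have hxint : IsIntegral ℤ x := by
    have : algebraMap ℚ ℂ x = β + (starRingEnd ℂ) β := by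
      rw [← hxval]; rfl
    rw [← isIntegral_algebraMap_iff (algebraMap ℚ ℂ).injective, this]
    exact hT
  obtain ⟨z, hz⟩ := IsIntegrallyClosed.isIntegral_iff.mp hxint
  have hzk : z * (q : ℤ) ^ u = k := by
    have h1 : (z : ℚ) = x := hz
    rw [hx, eq_div_iff hqQ] at h1
    exact_mod_cast h1
  have h1 : (k : ZMod p) = 0 := by
    rw [← hzk]
    push_cast [hpq]
    rw [zero_pow (by omega)]
    ring
  rw [hkp] at h1
  have h2 : (t : ZMod p) ≠ 0 := fun h => hpt ((ZMod.intCast_zmod_eq_zero_iff_dvd t p).mp h)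
  exact h2 ((pow_eq_zero_iff (n := 2 * u + 1) (by omega)).mp h1)

/-- With `α` as before (non-real algebraic integer with `α * conj α = q = p^e`,
`p ∤ α + conj α`), for any Weil `q`-integer `β` of weight one with `β ∉ {α, conj α}`,
and any integers `r`, `s`, we have `α ^ r * β ≠ q ^ s`. -/
theorem stmt2 (p e : ℕ) (hp : p.Prime) (he : 1 ≤ e) (q : ℕ) (hq : q = p ^ e)
    (α : ℂ) (hint : IsIntegral ℤ α) (himag : α.im ≠ 0)
    (hnorm : α * (starRingEnd ℂ) α = q)
    (htr : ∃ t : ℤ, α + (starRingEnd ℂ) α = (t : ℂ) ∧ ¬ ((p : ℤ) ∣ t))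
    (β : ℂ) (hβ : IsWeilInt q 1 β) (hβα : β ≠ α) (hβα' : β ≠ (starRingEnd ℂ) α) :
    ∀ r s : ℤ, α ^ r * β ≠ (q : ℂ) ^ s := by
  obtain ⟨t, ht, hpt⟩ := htr
  intro r s heq
  have hq2 : 2 ≤ q := by
    rw [hq]; exact Nat.one_lt_pow (by omega) hp.one_lt
  have hq0 : q ≠ 0 := by omega
  have hqC : ((q : ℂ)) ≠ 0 := by exact_mod_cast hq0
  have hqR0 : (0 : ℝ) < (q : ℝ) := by exact_mod_cast Nat.pos_of_ne_zero hq0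
  have hqR1 : (1 : ℝ) < (q : ℝ) := by exact_mod_cast hq2
  have hα0 : α ≠ 0 := by
    intro h; rw [h] at hnorm; simp at hnorm; exact hqC (by exact_mod_cast hnorm.symm)
  have hcα0 : (starRingEnd ℂ) α ≠ 0 := by
    simpa using hα0
  -- |α| = q^(1/2)
  have hnsq : Complex.normSq α = (q : ℝ) := by
    have := hnorm
    rw [Complex.mul_conj] at this
    exact_mod_cast this
  have habsα : ‖α‖ = (q : ℝ) ^ ((1 : ℝ) / 2) := by
    rw [Complex.norm_def, hnsq, Real.sqrt_eq_rpow]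
  have habsβ : ‖β‖ = (q : ℝ) ^ ((1 : ℝ) / 2) := by
    have := hβ.2 β (minpoly.aeval ℚ β)
    simpa using this
  -- take absolute values
  have habs : ((q : ℝ) ^ ((1 : ℝ) / 2)) ^ r * (q : ℝ) ^ ((1 : ℝ) / 2) = (q : ℝ) ^ s := by
    have := congrArg (‖·‖) heq
    rw [norm_mul, norm_zpow, norm_zpow, habsα, habsβ, Complex.norm_natCast] at this
    exact this
  have hr2s : r = 2 * s - 1 := by
    have h1 : (q : ℝ) ^ (((1 : ℝ) / 2) * (r : ℝ) + (1 : ℝ) / 2) = (q : ℝ) ^ ((s : ℝ)) := by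
      rw [Real.rpow_add hqR0, Real.rpow_mul hqR0.le, Real.rpow_intCast, Real.rpow_intCast]
      exact habs
    have h2 := (Real.strictMono_rpow_of_base_gt_one hqR1).injective h1
    have h3 : (r : ℝ) + 1 = 2 * (s : ℝ) := by linarith
    exact_mod_cast (by linarith : (r : ℝ) = 2 * (s : ℝ) - 1)
  by_cases hs1 : s = 1
  · -- β = conj α
    subst hs1
    rw [hr2s] at heq
    norm_num at heq
    exact hβα' (mul_left_cancel₀ hα0 (heq.trans hnorm.symm))
  by_cases hs0 : s = 0
  · -- β = α
    subst hs0
    rw [hr2s] at heq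
    norm_num at heq
    apply hβα
    field_simp at heq
    exact heq
  rcases lt_or_gt_of_ne hs0 with hneg | hpos
  · -- s ≤ -1 : u = -s ≥ 1, β * q^u = α^(2u+1)
    set u : ℕ := (-s).toNat with hu
    have hu1 : 1 ≤ u := by omega
    have hrw : r = -((2 * u + 1 : ℕ) : ℤ) ∧ s = -((u : ℕ) : ℤ) := by
      constructor <;> omega
    rw [hrw.1, hrw.2, zpow_neg, zpow_neg, zpow_natCast, zpow_natCast] at heq
    have hA : β * (q : ℂ) ^ u = α ^ (2 * u + 1) := by
      have hpow : α ^ (2 * u + 1) ≠ 0 := pow_ne_zero _ hα0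
      have hqpow : (q : ℂ) ^ u ≠ 0 := pow_ne_zero _ hqC
      field_simp at heq
      linear_combination heq
    have hB : (starRingEnd ℂ) β * (q : ℂ) ^ u = ((starRingEnd ℂ) α) ^ (2 * u + 1) := by
      have := congrArg (starRingEnd ℂ) hA
      simpa using this
    exact key_lemma p e q hp he hq α t ht hpt hnorm β hβ.1 u hu1
      (by linear_combination hA + hB)
  · -- s ≥ 2 : u = s - 1 ≥ 1
    set u : ℕ := (s - 1).toNat with hu
    have hu1 : 1 ≤ u := by omega
    have hrw : r = ((2 * u + 1 : ℕ) : ℤ) ∧ s = ((u + 1 : ℕ) : ℤ) := by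
      constructor <;> omega
    rw [hrw.1, hrw.2, zpow_natCast, zpow_natCast] at heq
    -- heq : α ^ (2u+1) * β = q ^ (u+1)
    have hβv : β = (q : ℂ) ^ (u + 1) / α ^ (2 * u + 1) :=
      (eq_div_iff (pow_ne_zero _ hα0)).mpr (by linear_combination heq)
    have hβv' : (starRingEnd ℂ) β = (q : ℂ) ^ (u + 1) / ((starRingEnd ℂ) α) ^ (2 * u + 1) := by
      rw [hβv]; simp
    apply key_lemma p e q hp he hq α t ht hpt hnorm β hβ.1 u hu1
    rw [hβv', hβv, ← hnorm]
    field_simp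
    ring
end

section
/- Let V be a finite-dimensional vector space over a field of characteristic zero, let T : V → V be a linear endomorphism, and let n ≥ 1. If the generalized eigenspace of T^n for the eigenvalue 1 equals the eigenspace of T^n for eigenvalue 1 (i.e., 1 is a semisimple eigenvalue of T^n), then 1 is a semisimple eigenvalue of T, i.e., ker((T − 1)^k) = ker(T − 1) for all k ≥ 1. -/
/-- If `V` is a finite-dimensional vector space over a characteristic-zero
field, `T : V → V` linear, `n ≥ 1`, and the eigenvalue `1` of `T ^ n` is semisimple
(generalized eigenspace = eigenspace), then the eigenvalue `1` of `T` is semisimple: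
`ker((T - 1) ^ k) = ker(T - 1)` for all `k ≥ 1`. -/
theorem stmt4 (K : Type*) [Field K] [CharZero K]
    (V : Type*) [AddCommGroup V] [Module K V] [FiniteDimensional K V]
    (T : Module.End K V) (n : ℕ) (hn : 1 ≤ n)
    (hss : ∀ k : ℕ, 1 ≤ k →
      LinearMap.ker ((T ^ n - 1) ^ k) = LinearMap.ker (T ^ n - 1)) :
    ∀ k : ℕ, 1 ≤ k → LinearMap.ker ((T - 1) ^ k) = LinearMap.ker (T - 1) := by
  -- Key step: ker((T-1)^2) ⊆ ker(T-1)
  have key : ∀ x : V, (T - 1) ((T - 1) x) = 0 → (T - 1) x = 0 := by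
    intro x hx
    set y := (T - 1) x with hy
    have hTy : T y = y := by
      have h : T y - y = 0 := by
        simpa [LinearMap.sub_apply, Module.End.one_apply] using hx
      exact sub_eq_zero.mp h
    have hTx : T x = x + y := by
      have h : T x - x = y := by
        simpa [LinearMap.sub_apply, Module.End.one_apply] using hy.symm
      rw [← h]; abel
    have hpowy : ∀ j : ℕ, (T ^ j) y = y := by
      intro j
      induction j with
      | zero => simp
      | succ j ih => rw [pow_succ, Module.End.mul_apply, hTy, ih]
    have hpow : ∀ j : ℕ, (T ^ j) x = x + j • y := by
      intro j
      induction j with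
      | zero => simp
      | succ j ih =>
        rw [pow_succ, Module.End.mul_apply, hTx, map_add, ih, hpowy, succ_nsmul]
        abel
    have h1 : (T ^ n - 1) x = n • y := by
      rw [LinearMap.sub_apply, Module.End.one_apply, hpow]; abel
    have h2 : (((T ^ n - 1) ^ 2 : Module.End K V)) x = 0 := by
      rw [sq, Module.End.mul_apply, h1, map_nsmul, LinearMap.sub_apply,
        Module.End.one_apply, hpowy, sub_self, smul_zero]
    have hx2 : x ∈ LinearMap.ker ((T ^ n - 1) ^ 2) := h2
    rw [hss 2 (by norm_num)] at hx2
    have hny : n • y = 0 := by rw [← h1]; exact hx2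
    have : (n : K) • y = 0 := by rwa [Nat.cast_smul_eq_nsmul]
    rcases smul_eq_zero.mp this with h | h
    · exact absurd (Nat.cast_eq_zero.mp h) (by omega)
    · exact h
  intro k hk
  induction k with
  | zero => omega
  | succ k ih =>
    rcases Nat.eq_or_lt_of_le hk with h | h
    · simp [← h]
    · have hk1 : 1 ≤ k := by omega
      apply le_antisymm
      · intro x hx
        simp only [LinearMap.mem_ker, pow_succ, Module.End.mul_apply] at hx ⊢
        have h1 : (T - 1) x ∈ LinearMap.ker ((T - 1) ^ k) := hx
        rw [ih hk1] at h1
        exact key x h1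
      · intro x hx
        simp only [LinearMap.mem_ker] at hx ⊢
        rw [pow_succ, Module.End.mul_apply, hx, map_zero]
end

section
/- Let q be a prime power, and for i = 1, …, n and j = 1, …, n, let α_i, β_j be Weil q-integers of weight 1 none of whose traces are divisible by p (where q is a power of p), and let r_i, s_i, t_j, u_j be integers with r_i, t_j ≥ 1. Suppose the polynomial identity ∏_i (1 − q^{−s_i} α_i^{r_i} t)(1 − q^{−s_i} conj(α_i)^{r_i} t) = ∏_j (1 − q^{−u_j} β_j^{t_j} t)(1 − q^{−u_j} conj(β_j)^{t_j} t) holds in ℂ[t]. Then there is a permutation σ of {1,…,n} such that for all i: r_i = t_{σ(i)}, s_i = u_{σ(i)}, and ℚ(α_i) = ℚ(β_{σ(i)}). -/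
open Polynomial IntermediateField

section WeilAux

variable {p : ℕ}

lemma weil_trace_pow {α : ℂ} {a : ℤ} {Q : ℕ}
    (ha : α + (starRingEnd ℂ) α = (a : ℂ)) (hn : α * (starRingEnd ℂ) α = (Q : ℂ))
    (hQ : (Q : ZMod p) = 0) :
    ∀ k : ℕ, ∃ A : ℤ, α ^ k + ((starRingEnd ℂ) α) ^ k = (A : ℂ) ∧
      (1 ≤ k → (A : ZMod p) = (a : ZMod p) ^ k) := by
  set c := (starRingEnd ℂ) α with hc
  suffices H : ∀ k : ℕ,
      (∃ A : ℤ, α ^ k + c ^ k = (A : ℂ) ∧ (1 ≤ k → (A : ZMod p) = (a : ZMod p) ^ k)) ∧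
      (∃ A : ℤ, α ^ (k+1) + c ^ (k+1) = (A : ℂ) ∧
        (1 ≤ k+1 → (A : ZMod p) = (a : ZMod p) ^ (k+1))) by
    exact fun k => (H k).1
  intro k
  induction k with
  | zero =>
    constructor
    · exact ⟨2, by norm_num, by omega⟩
    · exact ⟨a, by simpa using ha, fun _ => by simp⟩
  | succ k ih =>
    obtain ⟨⟨A, hA, hA'⟩, ⟨B, hB, hB'⟩⟩ := ih
    refine ⟨⟨B, hB, hB'⟩, ⟨a * B - Q * A, ?_, ?_⟩⟩
    · have key : α ^ (k+2) + c ^ (k+2)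
          = (α + c) * (α ^ (k+1) + c ^ (k+1)) - (α * c) * (α ^ k + c ^ k) := by ring
      rw [key, ha, hn, hA, hB]
      push_cast
      ring
    · intro _
      push_cast
      rw [hB' (by omega), hQ]
      ring

lemma weil_trace_pow' (hp : p.Prime) {α : ℂ} {a : ℤ} {Q : ℕ}
    (ha : α + (starRingEnd ℂ) α = (a : ℂ)) (hn : α * (starRingEnd ℂ) α = (Q : ℂ))
    (hQ : (Q : ZMod p) = 0) (hpa : ¬ ((p : ℤ) ∣ a)) {k : ℕ} (hk : 1 ≤ k) :
    ∃ A : ℤ, α ^ k + ((starRingEnd ℂ) α) ^ k = (A : ℂ) ∧ ¬ ((p : ℤ) ∣ A) := by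
  haveI : Fact p.Prime := ⟨hp⟩
  obtain ⟨A, hA, hA'⟩ := weil_trace_pow ha hn hQ k
  refine ⟨A, hA, fun hdvd => ?_⟩
  have h1 : (A : ZMod p) = 0 := (ZMod.intCast_zmod_eq_zero_iff_dvd A p).2 hdvd
  have h2 : (a : ZMod p) ≠ 0 := fun h => hpa ((ZMod.intCast_zmod_eq_zero_iff_dvd a p).1 h)
  rw [hA' hk] at h1
  exact h2 ((pow_eq_zero_iff (n := k) (by omega)).1 h1)

lemma weil_pow_not_real (hp : p.Prime) {α : ℂ} {a : ℤ} {Q : ℕ}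
    (ha : α + (starRingEnd ℂ) α = (a : ℂ)) (hn : α * (starRingEnd ℂ) α = (Q : ℂ))
    (hQ : (Q : ZMod p) = 0) (hpa : ¬ ((p : ℤ) ∣ a)) {N : ℕ} (hN : 1 ≤ N) :
    (starRingEnd ℂ) (α ^ N) ≠ α ^ N := by
  intro hreal
  obtain ⟨A, hA, hA'⟩ := weil_trace_pow' hp ha hn hQ hpa (k := 2 * N) (by omega)
  rw [map_pow] at hreal
  have h1 : α ^ (2 * N) = (Q : ℂ) ^ N := by
    rw [two_mul, pow_add, ← hn]
    conv_lhs => rw [show α ^ N * α ^ N = α ^ N * ((starRingEnd ℂ) α) ^ N from by rw [hreal]]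
    rw [← mul_pow]
  have h2 : ((starRingEnd ℂ) α) ^ (2 * N) = (Q : ℂ) ^ N := by
    rw [two_mul, pow_add, hreal, ← h1, two_mul, pow_add]
  have h3 : (A : ℂ) = ((2 * (Q : ℤ) ^ N : ℤ) : ℂ) := by
    rw [← hA, h1, h2]; push_cast; ring
  have h4 : A = 2 * (Q : ℤ) ^ N := by exact_mod_cast h3
  apply hA'
  have hpQ : (p : ℤ) ∣ (Q : ℤ) :=
    Int.natCast_dvd_natCast.2 ((ZMod.natCast_eq_zero_iff Q p).1 hQ)
  rw [h4]
  exact Dvd.dvd.mul_left (dvd_pow hpQ (by omega)) 2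

lemma weil_not_real (hp : p.Prime) {α : ℂ} {a : ℤ} {Q : ℕ}
    (ha : α + (starRingEnd ℂ) α = (a : ℂ)) (hn : α * (starRingEnd ℂ) α = (Q : ℂ))
    (hQ : (Q : ZMod p) = 0) (hpa : ¬ ((p : ℤ) ∣ a)) :
    (starRingEnd ℂ) α ≠ α := by
  have := weil_pow_not_real hp ha hn hQ hpa (N := 1) le_rfl
  simpa using this

lemma weil_isIntegral {α : ℂ} {a : ℤ} {Q : ℕ}
    (ha : α + (starRingEnd ℂ) α = (a : ℂ)) (hn : α * (starRingEnd ℂ) α = (Q : ℂ)) :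
    IsIntegral ℚ α := by
  obtain ⟨aq, haq⟩ : ∃ aq : ℚ, aq = (a : ℚ) := ⟨_, rfl⟩
  obtain ⟨Qq, hQq⟩ : ∃ Qq : ℚ, Qq = (Q : ℚ) := ⟨_, rfl⟩
  refine ⟨X ^ 2 - C aq * X + C Qq, ?_, ?_⟩
  · have h2 : (X ^ 2 - C aq * X + C Qq).natDegree = 2 := by compute_degree!
    have h3 : (X ^ 2 - C aq * X + C Qq).coeff 2 = 1 := by
      simp [coeff_X_pow, coeff_C]
    unfold Monic leadingCoeff
    rw [h2, h3]
  · have hc : (starRingEnd ℂ) α = (a : ℂ) - α := by linear_combination ha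
    rw [hc] at hn
    have : (Polynomial.aeval α) (X ^ 2 - C aq * X + C Qq) = 0 := by
      simp only [map_add, map_sub, map_mul, map_pow, aeval_X, aeval_C, haq, hQq, eq_ratCast]
      push_cast
      linear_combination -hn
    rwa [Polynomial.aeval_def] at this

lemma weil_minpoly_natDegree (hp : p.Prime) {α : ℂ} {a : ℤ} {Q : ℕ}
    (ha : α + (starRingEnd ℂ) α = (a : ℂ)) (hn : α * (starRingEnd ℂ) α = (Q : ℂ))
    (hQ : (Q : ZMod p) = 0) (hpa : ¬ ((p : ℤ) ∣ a)) :
    (minpoly ℚ α).natDegree = 2 := by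
  have hint : IsIntegral ℚ α := weil_isIntegral ha hn
  have hnr : α ∉ (algebraMap ℚ ℂ).range := by
    rintro ⟨x, rfl⟩
    exact weil_not_real hp ha hn hQ hpa (by simp [Complex.conj_ofReal])
  have hge : 2 ≤ (minpoly ℚ α).natDegree := (minpoly.two_le_natDegree_iff hint).2 hnr
  obtain ⟨aq, haq⟩ : ∃ aq : ℚ, aq = (a : ℚ) := ⟨_, rfl⟩
  obtain ⟨Qq, hQq⟩ : ∃ Qq : ℚ, Qq = (Q : ℚ) := ⟨_, rfl⟩
  have hg0 : (X ^ 2 - C aq * X + C Qq) ≠ 0 := by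
    intro h
    have := congrArg (fun f => Polynomial.coeff f 2) h
    simp [coeff_X_pow, coeff_C] at this
  have hdvd : minpoly ℚ α ∣ X ^ 2 - C aq * X + C Qq := by
    apply minpoly.dvd
    have hc : (starRingEnd ℂ) α = (a : ℂ) - α := by linear_combination ha
    rw [hc] at hn
    simp only [map_add, map_sub, map_mul, map_pow, aeval_X, aeval_C, haq, hQq, eq_ratCast]
    push_cast
    linear_combination -hn
  have hle : (minpoly ℚ α).natDegree ≤ 2 := by
    have := Polynomial.natDegree_le_of_dvd hdvd hg0
    have h2 : (X ^ 2 - C aq * X + C Qq).natDegree = 2 := by compute_degree!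
    omega
  omega

lemma weil_finrank (hp : p.Prime) {α : ℂ} {a : ℤ} {Q : ℕ}
    (ha : α + (starRingEnd ℂ) α = (a : ℂ)) (hn : α * (starRingEnd ℂ) α = (Q : ℂ))
    (hQ : (Q : ZMod p) = 0) (hpa : ¬ ((p : ℤ) ∣ a)) :
    Module.finrank ℚ (IntermediateField.adjoin ℚ {α}) = 2 := by
  rw [IntermediateField.adjoin.finrank (weil_isIntegral ha hn)]
  exact weil_minpoly_natDegree hp ha hn hQ hpa

lemma weil_pow_data (hp : p.Prime) {α : ℂ} {a : ℤ} {Q : ℕ}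
    (ha : α + (starRingEnd ℂ) α = (a : ℂ)) (hn : α * (starRingEnd ℂ) α = (Q : ℂ))
    (hQ : (Q : ZMod p) = 0) (hpa : ¬ ((p : ℤ) ∣ a)) {N : ℕ} (hN : 1 ≤ N) :
    ∃ A : ℤ, (α ^ N + (starRingEnd ℂ) (α ^ N) = (A : ℂ)) ∧
      (α ^ N * (starRingEnd ℂ) (α ^ N) = ((Q ^ N : ℕ) : ℂ)) ∧
      ((Q ^ N : ℕ) : ZMod p) = 0 ∧ ¬ ((p : ℤ) ∣ A) := by
  obtain ⟨A, hA, hA'⟩ := weil_trace_pow' hp ha hn hQ hpa hN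
  refine ⟨A, by rwa [map_pow], ?_, ?_, hA'⟩
  · rw [map_pow, ← mul_pow, hn]; push_cast; ring
  · push_cast [hQ]; exact zero_pow (by omega)

lemma weil_adjoin_pow (hp : p.Prime) {α : ℂ} {a : ℤ} {Q : ℕ}
    (ha : α + (starRingEnd ℂ) α = (a : ℂ)) (hn : α * (starRingEnd ℂ) α = (Q : ℂ))
    (hQ : (Q : ZMod p) = 0) (hpa : ¬ ((p : ℤ) ∣ a)) {N : ℕ} (hN : 1 ≤ N) :
    IntermediateField.adjoin ℚ {α ^ N} = IntermediateField.adjoin ℚ {α} := by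
  obtain ⟨A, h1, h2, h3, h4⟩ := weil_pow_data hp ha hn hQ hpa hN
  have hint : IsIntegral ℚ α := weil_isIntegral ha hn
  haveI : FiniteDimensional ℚ (IntermediateField.adjoin ℚ {α}) := by
    apply IntermediateField.adjoin.finiteDimensional hint
  have hle : IntermediateField.adjoin ℚ {α ^ N} ≤ IntermediateField.adjoin ℚ {α} := by
    rw [IntermediateField.adjoin_simple_le_iff]
    exact pow_mem (IntermediateField.mem_adjoin_simple_self ℚ α) N
  apply IntermediateField.eq_of_le_of_finrank_le hle
  rw [weil_finrank hp ha hn hQ hpa, weil_finrank hp h1 h2 h3 h4]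

lemma weil_key_aux (hp : p.Prime) {Q : ℕ} (hQ : (Q : ZMod p) = 0) (hQ1 : 1 < Q)
    {α β : ℂ} {a b : ℤ}
    (ha : α + (starRingEnd ℂ) α = (a : ℂ)) (hna : α * (starRingEnd ℂ) α = (Q : ℂ))
    (hpa : ¬ ((p : ℤ) ∣ a))
    (hb : β + (starRingEnd ℂ) β = (b : ℂ)) (hnb : β * (starRingEnd ℂ) β = (Q : ℂ))
    (hpb : ¬ ((p : ℤ) ∣ b))
    {r s t u : ℤ} (hr : 1 ≤ r) (ht : 1 ≤ t) (htr : t ≤ r)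
    (heq : (Q : ℂ) ^ (-s) * α ^ r = (Q : ℂ) ^ (-u) * β ^ t) :
    r = t ∧ s = u ∧
      IntermediateField.adjoin ℚ {α} = IntermediateField.adjoin ℚ {β} := by
  have hQR : (1 : ℝ) < (Q : ℝ) := by exact_mod_cast hQ1
  have hQR0 : (0 : ℝ) < (Q : ℝ) := by linarith
  have hQC : (Q : ℂ) ≠ 0 := by
    simp only [ne_eq, Nat.cast_eq_zero]; omega
  -- absolute values
  have habs : ∀ (γ : ℂ), γ * (starRingEnd ℂ) γ = (Q : ℂ) → ‖γ‖ ^ 2 = (Q : ℝ) := by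
    intro γ hγ
    have := congrArg (fun z : ℂ => ‖z‖) hγ
    rwa [norm_mul, Complex.norm_conj, ← sq, Complex.norm_natCast] at this
  have haα := habs α hna
  have haβ := habs β hnb
  have hsq : ∀ (A : ℝ) (k m : ℤ), A ^ 2 = (Q:ℝ) →
      ((Q:ℝ) ^ (-m) * A ^ k) ^ 2 = (Q:ℝ) ^ (k - 2*m) := by
    intro A k m hA
    have e1 : (A ^ k) ^ (2:ℕ) = (Q:ℝ) ^ k := by
      rw [← zpow_natCast (A ^ k) 2, ← zpow_mul, mul_comm, zpow_mul, zpow_natCast, hA]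
    have e0 : ((Q:ℝ) ^ (-m)) ^ (2:ℕ) = (Q:ℝ) ^ (-(2*m)) := by
      rw [← zpow_natCast ((Q:ℝ) ^ (-m)) 2, ← zpow_mul]
      congr 1; push_cast; ring
    rw [mul_pow, e1, e0, ← zpow_add₀ (ne_of_gt hQR0)]
    congr 1; ring
  have habs2 : (Q : ℝ) ^ (r - 2 * s) = (Q : ℝ) ^ (t - 2 * u) := by
    have h1 := congrArg (fun z : ℂ => ‖z‖ ^ 2) heq
    simp only [norm_mul, norm_zpow, Complex.norm_natCast] at h1
    rw [← hsq _ r s haα, ← hsq _ t u haβ]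
    exact_mod_cast h1
  have hkey : r - 2 * s = t - 2 * u :=
    zpow_right_injective₀ hQR0 (ne_of_gt hQR) habs2
  have h1 : α ^ r = (Q:ℂ) ^ (s - u) * β ^ t := by
    calc α ^ r = (Q:ℂ) ^ s * ((Q:ℂ) ^ (-s) * α ^ r) := by
          rw [← mul_assoc, ← zpow_add₀ hQC]; simp
      _ = (Q:ℂ) ^ s * ((Q:ℂ) ^ (-u) * β ^ t) := by rw [heq]
      _ = (Q:ℂ) ^ (s - u) * β ^ t := by
          rw [← mul_assoc, ← zpow_add₀ hQC, ← sub_eq_add_neg]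
  set R := r.toNat with hRdef
  set T := t.toNat with hTdef
  set M := (s - u).toNat with hMdef
  have hR : (R:ℤ) = r := Int.toNat_of_nonneg (by omega)
  have hT : (T:ℤ) = t := Int.toNat_of_nonneg (by omega)
  have hM : (M:ℤ) = s - u := Int.toNat_of_nonneg (by omega)
  have h2 : α ^ R = (Q:ℂ) ^ M * β ^ T := by
    rw [← zpow_natCast α R, ← zpow_natCast β T, ← zpow_natCast ((Q:ℂ)) M, hR, hT, hM]
    exact h1
  have h3 : ((starRingEnd ℂ) α) ^ R = (Q:ℂ) ^ M * ((starRingEnd ℂ) β) ^ T := by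
    have := congrArg (starRingEnd ℂ) h2
    simpa only [map_mul, map_pow, map_natCast] using this
  have hR1 : 1 ≤ R := by omega
  have hT1 : 1 ≤ T := by omega
  obtain ⟨A, hA, hA'⟩ := weil_trace_pow' hp ha hna hQ hpa hR1
  obtain ⟨B, hB, _⟩ := weil_trace_pow' hp hb hnb hQ hpb hT1
  have hsum : (A:ℂ) = (Q:ℂ) ^ M * (B:ℂ) := by
    calc (A:ℂ) = α ^ R + ((starRingEnd ℂ) α) ^ R := hA.symm
      _ = (Q:ℂ) ^ M * (β ^ T + ((starRingEnd ℂ) β) ^ T) := by rw [h2, h3]; ring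
      _ = (Q:ℂ) ^ M * (B:ℂ) := by rw [hB]
  have hAZ : A = (Q:ℤ) ^ M * B := by exact_mod_cast hsum
  have hM0 : M = 0 := by
    by_contra h
    apply hA'
    have hpQ : (p:ℤ) ∣ (Q:ℤ) :=
      Int.natCast_dvd_natCast.2 ((ZMod.natCast_eq_zero_iff Q p).1 hQ)
    rw [hAZ]
    exact Dvd.dvd.mul_right (dvd_pow hpQ h) B
  have hsu : s = u := by omega
  have hrt : r = t := by omega
  refine ⟨hrt, hsu, ?_⟩
  have hRT : R = T := by omega
  have h4 : α ^ R = β ^ T := by rw [h2, hM0]; simp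
  rw [← weil_adjoin_pow hp ha hna hQ hpa hR1, ← weil_adjoin_pow hp hb hnb hQ hpb hT1, h4]

lemma weil_key (hp : p.Prime) {Q : ℕ} (hQ : (Q : ZMod p) = 0) (hQ1 : 1 < Q)
    {α β : ℂ} {a b : ℤ}
    (ha : α + (starRingEnd ℂ) α = (a : ℂ)) (hna : α * (starRingEnd ℂ) α = (Q : ℂ))
    (hpa : ¬ ((p : ℤ) ∣ a))
    (hb : β + (starRingEnd ℂ) β = (b : ℂ)) (hnb : β * (starRingEnd ℂ) β = (Q : ℂ))
    (hpb : ¬ ((p : ℤ) ∣ b))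
    {r s t u : ℤ} (hr : 1 ≤ r) (ht : 1 ≤ t)
    (heq : (Q : ℂ) ^ (-s) * α ^ r = (Q : ℂ) ^ (-u) * β ^ t) :
    r = t ∧ s = u ∧
      IntermediateField.adjoin ℚ {α} = IntermediateField.adjoin ℚ {β} := by
  rcases le_total t r with h | h
  · exact weil_key_aux hp hQ hQ1 ha hna hpa hb hnb hpb hr ht h heq
  · obtain ⟨h1, h2, h3⟩ :=
      weil_key_aux hp hQ hQ1 hb hnb hpb ha hna hpa ht hr h heq.symm
    exact ⟨h1.symm, h2.symm, h3.symm⟩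

lemma adjoin_conj {β : ℂ} {b : ℤ} (hb : β + (starRingEnd ℂ) β = (b : ℂ)) :
    IntermediateField.adjoin ℚ {(starRingEnd ℂ) β} = IntermediateField.adjoin ℚ {β} := by
  have h1 : (starRingEnd ℂ) β = (b : ℂ) - β := by linear_combination hb
  apply le_antisymm <;> rw [IntermediateField.adjoin_simple_le_iff]
  · rw [h1]
    exact sub_mem (IntermediateField.intCast_mem _ b)
      (IntermediateField.mem_adjoin_simple_self ℚ β)
  · have h2 : β = (b : ℂ) - (starRingEnd ℂ) β := by linear_combination hb
    have h3 : ((b : ℂ) - (starRingEnd ℂ) β) ∈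
        IntermediateField.adjoin ℚ {(starRingEnd ℂ) β} :=
      sub_mem (IntermediateField.intCast_mem _ b)
        (IntermediateField.mem_adjoin_simple_self ℚ ((starRingEnd ℂ) β))
    rwa [← h2] at h3

lemma exists_perm_of_ofFn_perm {γ : Type*} :
    ∀ {n : ℕ} (g h : Fin n → γ), (List.ofFn g).Perm (List.ofFn h) →
      ∃ σ : Equiv.Perm (Fin n), ∀ i, g i = h (σ i) := by
  intro n
  induction n with
  | zero => exact fun g h _ => ⟨1, fun i => i.elim0⟩
  | succ n ih =>
    intro g h hperm
    have hmem : g 0 ∈ List.ofFn h := hperm.mem_iff.1 (by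
      rw [List.ofFn_succ]; exact List.mem_cons_self)
    rw [List.mem_ofFn] at hmem
    obtain ⟨j, hj⟩ := hmem
    set h1 : Fin (n+1) → γ := h ∘ (Equiv.swap 0 j) with hh1
    have hperm1 : (List.ofFn g).Perm (List.ofFn h1) :=
      hperm.trans (Equiv.Perm.ofFn_comp_perm (Equiv.swap 0 j) h).symm
    have hh10 : h1 0 = g 0 := by simp [hh1, Equiv.swap_apply_left, hj]
    rw [List.ofFn_succ, List.ofFn_succ, hh10] at hperm1
    have htail := hperm1.cons_inv
    obtain ⟨τ, hτ⟩ := ih (fun i => g i.succ) (fun i => h1 i.succ) htail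
    refine ⟨Equiv.Perm.decomposeFin.symm (j, τ), ?_⟩
    intro i
    refine Fin.cases ?_ ?_ i
    · rw [Equiv.Perm.decomposeFin_symm_apply_zero, hj]
    · intro x
      rw [Equiv.Perm.decomposeFin_symm_apply_succ]
      exact hτ x

lemma weil_norm {q : ℕ} {α : ℂ} (h : IsWeilInt q 1 α) :
    α * (starRingEnd ℂ) α = (q : ℂ) := by
  have h1 : ‖α‖ = (q : ℝ) ^ (((1:ℕ) : ℝ) / 2) := h.2 α (minpoly.aeval ℚ α)
  have h2 : ‖α‖ ^ 2 = (q : ℝ) := by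
    rw [h1, ← Real.rpow_natCast ((q:ℝ) ^ (((1:ℕ):ℝ)/2)) 2, ← Real.rpow_mul (by positivity)]
    norm_num
  rw [Complex.mul_conj]
  rw [← Complex.sq_norm, h2]
  simp

end WeilAux

/-- Let `α_i`, `β_j` (`1 ≤ i, j ≤ n`) be Weil `q`-integers of weight 1
whose traces are prime to `p` (ordinarity), and `r_i, s_i, t_j, u_j ∈ ℤ` with
`r_i, t_j ≥ 1`. If `∏_i (1 - q^{-s_i} α_i^{r_i} z)(1 - q^{-s_i} conj(α_i)^{r_i} z)
= ∏_j (1 - q^{-u_j} β_j^{t_j} z)(1 - q^{-u_j} conj(β_j)^{t_j} z)` as polynomials in `z`,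
then there is a permutation `σ` with `r_i = t_{σ(i)}`, `s_i = u_{σ(i)}` and
`ℚ(α_i) = ℚ(β_{σ(i)})`. -/
theorem stmt10 (p e : ℕ) (hp : p.Prime) (he : 1 ≤ e) (q : ℕ) (hq : q = p ^ e)
    (n : ℕ) (α β : Fin n → ℂ)
    (hα : ∀ i, IsWeilInt q 1 (α i)) (hβ : ∀ j, IsWeilInt q 1 (β j))
    (hαtr : ∀ i, ∃ t : ℤ, α i + (starRingEnd ℂ) (α i) = (t : ℂ) ∧ ¬ ((p : ℤ) ∣ t))
    (hβtr : ∀ j, ∃ t : ℤ, β j + (starRingEnd ℂ) (β j) = (t : ℂ) ∧ ¬ ((p : ℤ) ∣ t))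
    (r s t u : Fin n → ℤ) (hr : ∀ i, 1 ≤ r i) (ht : ∀ j, 1 ≤ t j)
    (hpoly : ∀ z : ℂ,
      ∏ i : Fin n, ((1 - (q : ℂ) ^ (-(s i)) * (α i) ^ (r i) * z) *
        (1 - (q : ℂ) ^ (-(s i)) * ((starRingEnd ℂ) (α i)) ^ (r i) * z)) =
      ∏ j : Fin n, ((1 - (q : ℂ) ^ (-(u j)) * (β j) ^ (t j) * z) *
        (1 - (q : ℂ) ^ (-(u j)) * ((starRingEnd ℂ) (β j)) ^ (t j) * z))) :
    ∃ σ : Equiv.Perm (Fin n), ∀ i : Fin n,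
      r i = t (σ i) ∧ s i = u (σ i) ∧
      IntermediateField.adjoin ℚ {α i} = IntermediateField.adjoin ℚ {β (σ i)} := by
  -- basic facts about q
  have hq1 : 1 < q := by
    rw [hq]; exact Nat.one_lt_pow (by omega) hp.one_lt
  have hqz : (q : ZMod p) = 0 := by
    rw [hq]; push_cast [ZMod.natCast_self]; exact zero_pow (by omega)
  -- trace data
  choose a ha hpa using hαtr
  choose b hb hpb using hβtr
  have hna : ∀ i, α i * (starRingEnd ℂ) (α i) = (q : ℂ) := fun i => weil_norm (hα i)
  have hnb : ∀ j, β j * (starRingEnd ℂ) (β j) = (q : ℂ) := fun j => weil_norm (hβ j)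
  -- the coefficients
  set c : Fin n → ℂ := fun i => (q : ℂ) ^ (-(s i)) * (α i) ^ (r i) with hc
  set d : Fin n → ℂ := fun j => (q : ℂ) ^ (-(u j)) * (β j) ^ (t j) with hd
  have hcc : ∀ i, (starRingEnd ℂ) (c i)
      = (q : ℂ) ^ (-(s i)) * ((starRingEnd ℂ) (α i)) ^ (r i) := by
    intro i
    simp only [hc, map_mul, map_zpow₀, map_natCast]
  have hdc : ∀ j, (starRingEnd ℂ) (d j)
      = (q : ℂ) ^ (-(u j)) * ((starRingEnd ℂ) (β j)) ^ (t j) := by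
    intro j
    simp only [hd, map_mul, map_zpow₀, map_natCast]
  -- polynomial identity
  set F : Polynomial ℂ := ∏ i : Fin n, ((X - C (c i)) * (X - C ((starRingEnd ℂ) (c i)))) with hF
  set G : Polynomial ℂ := ∏ j : Fin n, ((X - C (d j)) * (X - C ((starRingEnd ℂ) (d j)))) with hG
  have hFG : F = G := by
    apply Polynomial.eq_of_infinite_eval_eq
    apply Set.Infinite.mono (s := {(0:ℂ)}ᶜ) _ ((Set.finite_singleton (0:ℂ)).infinite_compl)
    intro x hx
    have hx0 : x ≠ 0 := hx
    have hfac : ∀ w : ℂ, (x - w) = x * (1 - w * x⁻¹) := by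
      intro w; field_simp
    have hEF : F.eval x = ∏ i : Fin n, ((x - c i) * (x - (starRingEnd ℂ) (c i))) := by
      simp [hF, Polynomial.eval_prod]
    have hEG : G.eval x = ∏ j : Fin n, ((x - d j) * (x - (starRingEnd ℂ) (d j))) := by
      simp [hG, Polynomial.eval_prod]
    have hkey : (∏ i : Fin n, ((x - c i) * (x - (starRingEnd ℂ) (c i))))
        = ∏ j : Fin n, ((x - d j) * (x - (starRingEnd ℂ) (d j))) := by
      have hp1 := hpoly x⁻¹
      calc ∏ i : Fin n, ((x - c i) * (x - (starRingEnd ℂ) (c i)))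
          = ∏ i : Fin n, ((x * x) *
            ((1 - c i * x⁻¹) * (1 - (starRingEnd ℂ) (c i) * x⁻¹))) := by
            refine Finset.prod_congr rfl fun i _ => ?_
            rw [hfac (c i), hfac ((starRingEnd ℂ) (c i))]; ring
        _ = (∏ _i : Fin n, (x * x)) *
            ∏ i : Fin n, ((1 - c i * x⁻¹) * (1 - (starRingEnd ℂ) (c i) * x⁻¹)) :=
            Finset.prod_mul_distrib
        _ = (∏ _j : Fin n, (x * x)) *
            ∏ j : Fin n, ((1 - d j * x⁻¹) * (1 - (starRingEnd ℂ) (d j) * x⁻¹)) := by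
            congr 1
            simp only [hcc, hdc]
            exact hp1
        _ = ∏ j : Fin n, ((x * x) *
            ((1 - d j * x⁻¹) * (1 - (starRingEnd ℂ) (d j) * x⁻¹))) :=
            Finset.prod_mul_distrib.symm
        _ = ∏ j : Fin n, ((x - d j) * (x - (starRingEnd ℂ) (d j))) := by
            refine Finset.prod_congr rfl fun j _ => ?_
            rw [hfac (d j), hfac ((starRingEnd ℂ) (d j))]; ring
    rw [Set.mem_setOf_eq, hEF, hEG]
    exact hkey
  -- multiset of roots
  set Mc : Multiset ℂ := (Finset.univ.val.map c) +
    (Finset.univ.val.map fun i => (starRingEnd ℂ) (c i)) with hMc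
  set Md : Multiset ℂ := (Finset.univ.val.map d) +
    (Finset.univ.val.map fun j => (starRingEnd ℂ) (d j)) with hMd
  have hFM : F = (Mc.map fun z => X - C z).prod := by
    rw [hMc, Multiset.map_add, Multiset.prod_add, Multiset.map_map, Multiset.map_map, hF,
      Finset.prod_mul_distrib]
    rfl
  have hGM : G = (Md.map fun z => X - C z).prod := by
    rw [hMd, Multiset.map_add, Multiset.prod_add, Multiset.map_map, Multiset.map_map, hG,
      Finset.prod_mul_distrib]
    rfl
  have hMcd : Mc = Md := by
    have h1 : F.roots = Mc := by rw [hFM]; exact Polynomial.roots_multiset_prod_X_sub_C Mc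
    have h2 : G.roots = Md := by rw [hGM]; exact Polynomial.roots_multiset_prod_X_sub_C Md
    rw [← h1, ← h2, hFG]
  -- conjugate pairs
  set P : ℂ → Multiset ℂ := fun z => {z, (starRingEnd ℂ) z} with hPdef
  have hPconj : ∀ z : ℂ, P ((starRingEnd ℂ) z) = P z := by
    intro z
    simp only [hPdef, Complex.conj_conj]
    exact Multiset.pair_comm _ _
  have hmaps : Finset.univ.val.map (fun i => P (c i))
      = Finset.univ.val.map (fun j => P (d j)) := by
    have h1 := congrArg (Multiset.map P) hMcd
    rw [hMc, hMd, Multiset.map_add, Multiset.map_add, Multiset.map_map, Multiset.map_map,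
      Multiset.map_map, Multiset.map_map] at h1
    have h2 : Multiset.map (P ∘ fun i => (starRingEnd ℂ) (c i)) Finset.univ.val
        = Multiset.map (fun i => P (c i)) Finset.univ.val :=
      Multiset.map_congr rfl fun i _ => hPconj (c i)
    have h3 : Multiset.map (P ∘ fun j => (starRingEnd ℂ) (d j)) Finset.univ.val
        = Multiset.map (fun j => P (d j)) Finset.univ.val :=
      Multiset.map_congr rfl fun j _ => hPconj (d j)
    rw [h2, h3] at h1
    ext x
    have h4 := congrArg (Multiset.count x) h1
    simp only [Multiset.count_add] at h4
    have : Multiset.map (P ∘ c) Finset.univ.val = Multiset.map (fun i => P (c i))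
      Finset.univ.val := rfl
    rw [this] at h4
    have : Multiset.map (P ∘ d) Finset.univ.val = Multiset.map (fun j => P (d j))
      Finset.univ.val := rfl
    rw [this] at h4
    omega
  -- extract the permutation
  have hlist : (List.ofFn (fun i => P (c i))).Perm (List.ofFn (fun j => P (d j))) := by
    rw [← Multiset.coe_eq_coe]
    have huniv : (Finset.univ : Finset (Fin n)).val = ↑(List.finRange n) := by
      rw [Fin.univ_def]
    rw [List.ofFn_eq_map, List.ofFn_eq_map, ← Multiset.map_coe, ← Multiset.map_coe,
      ← huniv]
    exact hmaps
  obtain ⟨σ, hσ⟩ := exists_perm_of_ofFn_perm _ _ hlist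
  refine ⟨σ, fun i => ?_⟩
  have hmem : c i ∈ P (d (σ i)) := by
    rw [← hσ i, hPdef]
    exact Multiset.mem_cons_self _ _
  rw [hPdef] at hmem
  rcases Multiset.mem_cons.1 hmem with hcase | hcase
  · -- c i = d (σ i)
    have heq : (q : ℂ) ^ (-(s i)) * (α i) ^ (r i)
        = (q : ℂ) ^ (-(u (σ i))) * (β (σ i)) ^ (t (σ i)) := hcase
    exact weil_key hp hqz hq1 (ha i) (hna i) (hpa i) (hb (σ i)) (hnb (σ i)) (hpb (σ i))
      (hr i) (ht (σ i)) heq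
  · -- c i = conj (d (σ i))
    have hcase' : c i = (starRingEnd ℂ) (d (σ i)) := by
      simpa using hcase
    set j := σ i
    have heq : (q : ℂ) ^ (-(s i)) * (α i) ^ (r i)
        = (q : ℂ) ^ (-(u j)) * ((starRingEnd ℂ) (β j)) ^ (t j) := by
      rw [← hdc j]; exact hcase'
    have hb' : (starRingEnd ℂ) (β j) + (starRingEnd ℂ) ((starRingEnd ℂ) (β j)) = (b j : ℂ) := by
      rw [Complex.conj_conj, add_comm]; exact hb j
    have hnb' : (starRingEnd ℂ) (β j) * (starRingEnd ℂ) ((starRingEnd ℂ) (β j)) = (q : ℂ) := by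
      rw [Complex.conj_conj, mul_comm]; exact hnb j
    obtain ⟨h1, h2, h3⟩ := weil_key hp hqz hq1 (ha i) (hna i) (hpa i) hb' hnb' (hpb j)
      (hr i) (ht j) heq
    exact ⟨h1, h2, h3.trans (adjoin_conj (hb j))⟩
end

section
/- Let q = p^e, and let α, β be Weil q-integers of weight 1 with p ∤ Tr(α) and p ∤ Tr(β), and let r, t ≥ 1, s, u ∈ ℤ. If (1 − q^{−s}α^r t)(1 − q^{−s}conj(α)^r t) = (1 − q^{−u}β^t t)(1 − q^{−u}conj(β)^t t) as polynomials, then r = t, s = u, and ℚ(α) = ℚ(β). -/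
private def cdf (b q : ℤ) : ℕ → ℤ × ℤ
  | 0 => (1, 0)
  | n+1 => (b * (cdf b q n).1 + (cdf b q n).2, -q * (cdf b q n).1)

private lemma cdf_pow (b q : ℤ) (γ δ : ℂ) (hs : γ + δ = (b : ℂ)) (hm : γ * δ = (q : ℂ)) :
    ∀ n : ℕ, γ ^ (n + 1) = ((cdf b q n).1 : ℂ) * γ + ((cdf b q n).2 : ℂ) := by
  have hsq : γ ^ 2 = (b : ℂ) * γ - (q : ℂ) := by linear_combination γ * hs - hm
  intro n
  induction n with
  | zero => simp [cdf]
  | succ n ih =>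
    have h2 : γ ^ (n + 2) = γ * γ ^ (n + 1) := by ring
    rw [h2, ih]
    simp only [cdf]
    push_cast
    linear_combination ((cdf b q n).1 : ℂ) * hsq

private lemma cdf_mod (p : ℕ) (b q : ℤ) (hq : (q : ZMod p) = 0) :
    ∀ n : ℕ, ((cdf b q n).1 : ZMod p) = (b : ZMod p) ^ n ∧ ((cdf b q n).2 : ZMod p) = 0 := by
  intro n
  induction n with
  | zero => simp [cdf]
  | succ n ih =>
    simp only [cdf]
    push_cast
    rw [ih.1, ih.2, hq]
    constructor <;> ring

private lemma mem_adjoin_of_pow_mem (p : ℕ) [Fact p.Prime] (b q : ℤ)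
    (hb : ¬ (p : ℤ) ∣ b) (hq : (p : ℤ) ∣ q) (γ δ : ℂ)
    (hs : γ + δ = (b : ℂ)) (hm : γ * δ = (q : ℂ))
    (K : IntermediateField ℚ ℂ) (n : ℕ) (h : γ ^ (n + 1) ∈ K) : γ ∈ K := by
  have hq0 : (q : ZMod p) = 0 := by rwa [ZMod.intCast_zmod_eq_zero_iff_dvd]
  set c := (cdf b q n).1 with hc
  set d := (cdf b q n).2 with hd
  have hcz : (c : ZMod p) ≠ 0 := by
    rw [hc, (cdf_mod p b q hq0 n).1]
    exact pow_ne_zero _ (by rwa [Ne, ZMod.intCast_zmod_eq_zero_iff_dvd])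
  have hc0 : (c : ℂ) ≠ 0 := by
    intro h0
    exact hcz (by rw [show c = 0 from by exact_mod_cast h0]; simp)
  have key : γ = ((c : ℂ))⁻¹ * (γ ^ (n + 1) - (d : ℂ)) := by
    rw [cdf_pow b q γ δ hs hm n]
    field_simp
    rw [hc, hd]; ring
  rw [key]
  exact K.mul_mem (K.inv_mem (K.intCast_mem c)) (K.sub_mem h (K.intCast_mem d))

private lemma no_shift (p q : ℕ) (hp : p.Prime) (hpq : p ∣ q) (Ta Tb : ℤ)
    (hTb : ¬ (p : ℤ) ∣ Tb) (s u : ℤ) (h : s < u) (hq1 : 0 < q)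
    (hS2 : (q : ℂ) ^ (-s) * (Ta : ℂ) = (q : ℂ) ^ (-u) * (Tb : ℂ)) : False := by
  have hq1 : 0 < q := hq1
  have hq0 : (q : ℂ) ≠ 0 := Nat.cast_ne_zero.mpr (by omega)
  have e3 : (q : ℂ) ^ u * (q : ℂ) ^ (-u) = 1 := by
    rw [← zpow_add₀ hq0]; simp
  have e4 : (q : ℂ) ^ u * (q : ℂ) ^ (-s) = (q : ℂ) ^ (u - s) := by
    rw [← zpow_add₀ hq0, sub_eq_add_neg]
  have h1 : (q : ℂ) ^ (u - s) * (Ta : ℂ) = (Tb : ℂ) := by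
    linear_combination (q : ℂ) ^ u * hS2 - (Ta : ℂ) * e4 + (Tb : ℂ) * e3
  rw [show u - s = (((u - s).toNat : ℕ) : ℤ) from by omega, zpow_natCast] at h1
  have h2 : (q : ℤ) ^ (u - s).toNat * Ta = Tb := by exact_mod_cast h1
  apply hTb
  rw [← h2]
  exact dvd_mul_of_dvd_left (dvd_pow (Int.natCast_dvd_natCast.mpr hpq) (by omega)) _

/-- Let `α`, `β` be Weil `q`-integers of weight 1 with `p ∤ Tr(α)` and
`p ∤ Tr(β)` (`q = p ^ e`), and `r, t ≥ 1`, `s, u ∈ ℤ`. If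
`(1 - q^{-s} α^r z)(1 - q^{-s} conj(α)^r z) = (1 - q^{-u} β^t z)(1 - q^{-u} conj(β)^t z)`
as polynomials in `z`, then `r = t`, `s = u` and `ℚ(α) = ℚ(β)`. -/
theorem stmt11 (p e : ℕ) (hp : p.Prime) (he : 1 ≤ e) (q : ℕ) (hq : q = p ^ e)
    (α β : ℂ) (hα : IsWeilInt q 1 α) (hβ : IsWeilInt q 1 β)
    (hαtr : ∃ a : ℤ, α + (starRingEnd ℂ) α = (a : ℂ) ∧ ¬ ((p : ℤ) ∣ a))
    (hβtr : ∃ b : ℤ, β + (starRingEnd ℂ) β = (b : ℂ) ∧ ¬ ((p : ℤ) ∣ b))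
    (r t : ℤ) (s u : ℤ) (hr : 1 ≤ r) (ht : 1 ≤ t)
    (hpoly : ∀ z : ℂ,
      (1 - (q : ℂ) ^ (-s) * α ^ r * z) * (1 - (q : ℂ) ^ (-s) * ((starRingEnd ℂ) α) ^ r * z) =
      (1 - (q : ℂ) ^ (-u) * β ^ t * z) * (1 - (q : ℂ) ^ (-u) * ((starRingEnd ℂ) β) ^ t * z)) :
    r = t ∧ s = u ∧
      IntermediateField.adjoin ℚ {α} = IntermediateField.adjoin ℚ {β} := by
  haveI : Fact p.Prime := ⟨hp⟩
  obtain ⟨a, ha, hpa⟩ := hαtr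
  obtain ⟨b, hb, hpb⟩ := hβtr
  have hq1 : 1 < q := by
    rw [hq]; exact Nat.one_lt_pow (by omega) hp.one_lt
  have hqC : (q : ℂ) ≠ 0 := Nat.cast_ne_zero.mpr (by omega)
  have hqR0 : (0 : ℝ) < q := by exact_mod_cast Nat.lt_of_lt_of_le Nat.zero_lt_one hq1.le
  have hpq : p ∣ q := hq ▸ dvd_pow_self p (by omega)
  -- products with conjugates
  have habs2 : ∀ γ : ℂ, IsWeilInt q 1 γ → γ * (starRingEnd ℂ) γ = (q : ℂ) := by
    intro γ hγ
    have h1 : ‖γ‖ = (q : ℝ) ^ (((1 : ℕ) : ℝ) / 2) := hγ.2 γ (minpoly.aeval ℚ γ)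
    have h2 : Complex.normSq γ = (q : ℝ) := by
      rw [← Complex.sq_norm, h1, ← Real.rpow_natCast ((q : ℝ) ^ (((1 : ℕ) : ℝ) / 2)) 2,
        ← Real.rpow_mul hqR0.le]
      norm_num
    rw [Complex.mul_conj, h2]
    norm_cast
  have hmα := habs2 α hα
  have hmβ := habs2 β hβ
  have hmαz : α * (starRingEnd ℂ) α = ((q : ℤ) : ℂ) := by exact_mod_cast hmα
  have hmβz : β * (starRingEnd ℂ) β = ((q : ℤ) : ℂ) := by exact_mod_cast hmβ
  -- natural exponents
  set r' : ℕ := r.toNat with hr'def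
  set t' : ℕ := t.toNat with ht'def
  have hrr : (r' : ℤ) = r := Int.toNat_of_nonneg (by omega)
  have htt : (t' : ℤ) = t := Int.toNat_of_nonneg (by omega)
  obtain ⟨m, hm⟩ : ∃ m, r' = m + 1 := ⟨r' - 1, by omega⟩
  obtain ⟨k, hk⟩ : ∃ k, t' = k + 1 := ⟨t' - 1, by omega⟩
  have hzα : α ^ r = α ^ r' := by rw [← hrr, zpow_natCast]
  have hzα' : ((starRingEnd ℂ) α) ^ r = ((starRingEnd ℂ) α) ^ r' := by rw [← hrr, zpow_natCast]
  have hzβ : β ^ t = β ^ t' := by rw [← htt, zpow_natCast]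
  have hzβ' : ((starRingEnd ℂ) β) ^ t = ((starRingEnd ℂ) β) ^ t' := by rw [← htt, zpow_natCast]
  -- traces as integers
  set Ta : ℤ := a * (cdf a (q : ℤ) m).1 + 2 * (cdf a (q : ℤ) m).2 with hTadef
  set Tb : ℤ := b * (cdf b (q : ℤ) k).1 + 2 * (cdf b (q : ℤ) k).2 with hTbdef
  have hTa : α ^ r' + (starRingEnd ℂ) α ^ r' = (Ta : ℂ) := by
    rw [hm, cdf_pow a (q : ℤ) α ((starRingEnd ℂ) α) ha hmαz m,
      cdf_pow a (q : ℤ) ((starRingEnd ℂ) α) α (by rw [add_comm]; exact ha)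
        (by rw [mul_comm]; exact hmαz) m, hTadef]
    push_cast
    linear_combination ((cdf a (q : ℤ) m).1 : ℂ) * ha
  have hTb : β ^ t' + (starRingEnd ℂ) β ^ t' = (Tb : ℂ) := by
    rw [hk, cdf_pow b (q : ℤ) β ((starRingEnd ℂ) β) hb hmβz k,
      cdf_pow b (q : ℤ) ((starRingEnd ℂ) β) β (by rw [add_comm]; exact hb)
        (by rw [mul_comm]; exact hmβz) k, hTbdef]
    push_cast
    linear_combination ((cdf b (q : ℤ) k).1 : ℂ) * hb
  -- traces are not divisible by p
  have hq0Z : (((q : ℤ)) : ZMod p) = 0 := by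
    rw [ZMod.intCast_zmod_eq_zero_iff_dvd]; exact_mod_cast hpq
  have haZ : ((a : ZMod p)) ≠ 0 := by rwa [Ne, ZMod.intCast_zmod_eq_zero_iff_dvd]
  have hbZ : ((b : ZMod p)) ≠ 0 := by rwa [Ne, ZMod.intCast_zmod_eq_zero_iff_dvd]
  have hTaZ : ¬ (p : ℤ) ∣ Ta := by
    intro hdvd
    have h0 : ((Ta : ℤ) : ZMod p) = 0 := by rwa [ZMod.intCast_zmod_eq_zero_iff_dvd]
    rw [hTadef] at h0
    push_cast at h0
    rw [(cdf_mod p a (q : ℤ) hq0Z m).1, (cdf_mod p a (q : ℤ) hq0Z m).2] at h0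
    have h1 : (a : ZMod p) ^ (m + 1) = 0 := by rw [pow_succ]; linear_combination h0
    exact haZ (pow_eq_zero_iff (by omega) |>.mp h1)
  have hTbZ : ¬ (p : ℤ) ∣ Tb := by
    intro hdvd
    have h0 : ((Tb : ℤ) : ZMod p) = 0 := by rwa [ZMod.intCast_zmod_eq_zero_iff_dvd]
    rw [hTbdef] at h0
    push_cast at h0
    rw [(cdf_mod p b (q : ℤ) hq0Z k).1, (cdf_mod p b (q : ℤ) hq0Z k).2] at h0
    have h1 : (b : ZMod p) ^ (k + 1) = 0 := by rw [pow_succ]; linear_combination h0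
    exact hbZ (pow_eq_zero_iff (by omega) |>.mp h1)
  -- products of powers
  have hPα : α ^ r' * (starRingEnd ℂ) α ^ r' = (q : ℂ) ^ r' := by rw [← mul_pow, hmα]
  have hPβ : β ^ t' * (starRingEnd ℂ) β ^ t' = (q : ℂ) ^ t' := by rw [← mul_pow, hmβ]
  -- coefficient comparison
  have hS : (q : ℂ) ^ (-s) * (α ^ r + (starRingEnd ℂ) α ^ r)
      = (q : ℂ) ^ (-u) * (β ^ t + (starRingEnd ℂ) β ^ t) := by
    linear_combination (hpoly (-1) - hpoly 1) / 2
  have hP : ((q : ℂ) ^ (-s) * (q : ℂ) ^ (-s)) * (α ^ r * (starRingEnd ℂ) α ^ r)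
      = ((q : ℂ) ^ (-u) * (q : ℂ) ^ (-u)) * (β ^ t * (starRingEnd ℂ) β ^ t) := by
    linear_combination (hpoly 1 + hpoly (-1)) / 2
  rw [hzα, hzα', hzβ, hzβ'] at hS hP
  rw [hPα, hPβ] at hP
  -- exponent equation
  have hPz : (q : ℂ) ^ (r - 2 * s) = (q : ℂ) ^ (t - 2 * u) := by
    have l1 : (q : ℂ) ^ (r - 2 * s) = ((q : ℂ) ^ (-s) * (q : ℂ) ^ (-s)) * (q : ℂ) ^ r' := by
      rw [← zpow_natCast (q : ℂ) r', ← zpow_add₀ hqC, ← zpow_add₀ hqC]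
      congr 1
      omega
    have l2 : (q : ℂ) ^ (t - 2 * u) = ((q : ℂ) ^ (-u) * (q : ℂ) ^ (-u)) * (q : ℂ) ^ t' := by
      rw [← zpow_natCast (q : ℂ) t', ← zpow_add₀ hqC, ← zpow_add₀ hqC]
      congr 1
      omega
    rw [l1, l2, hP]
  have hrtsu : r - 2 * s = t - 2 * u := by
    have hR : (q : ℝ) ^ (r - 2 * s) = (q : ℝ) ^ (t - 2 * u) := by
      apply Complex.ofReal_injective
      push_cast
      exact hPz
    exact zpow_right_injective₀ hqR0 (by exact_mod_cast hq1.ne') hR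
  -- trace equation
  rw [hTa, hTb] at hS
  have hsu : s = u := by
    by_contra hne
    rcases lt_or_gt_of_ne hne with hlt | hlt
    · exact no_shift p q hp hpq Ta Tb hTbZ s u hlt (by omega) hS
    · exact no_shift p q hp hpq Tb Ta hTaZ u s hlt (by omega) hS.symm
  have hrt : r = t := by omega
  have ht'r' : t' = r' := by omega
  rw [ht'r'] at hTb hPβ
  refine ⟨hrt, hsu, ?_⟩
  subst hsu
  have hTab : (Ta : ℂ) = (Tb : ℂ) := mul_left_cancel₀ (zpow_ne_zero _ hqC) hS
  have hsum : α ^ r' + (starRingEnd ℂ) α ^ r' = β ^ r' + (starRingEnd ℂ) β ^ r' :=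
    hTa.trans (hTab.trans hTb.symm)
  have key : (α ^ r' - β ^ r') * (α ^ r' - (starRingEnd ℂ) β ^ r') = 0 := by
    linear_combination (α ^ r') * hsum + hPβ - hPα
  -- field membership machinery
  have hbdvd : (p : ℤ) ∣ (q : ℤ) := Int.natCast_dvd_natCast.mpr hpq
  have memlem : ∀ γ δ : ℂ, ∀ c : ℤ, ¬ (p : ℤ) ∣ c → γ + δ = (c : ℂ) → γ * δ = ((q : ℤ) : ℂ) →
      ∀ K : IntermediateField ℚ ℂ, γ ^ r' ∈ K → γ ∈ K := by
    intro γ δ c hc hgs hgm K hmem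
    rw [hm] at hmem
    exact mem_adjoin_of_pow_mem p c (q : ℤ) hc hbdvd γ δ hgs hgm K m hmem
  rcases mul_eq_zero.mp key with h | h
  · have h1 : α ^ r' = β ^ r' := by linear_combination h
    have hβmem : β ∈ IntermediateField.adjoin ℚ {α} :=
      memlem β ((starRingEnd ℂ) β) b hpb hb hmβz _
        (by rw [← h1]; exact pow_mem (IntermediateField.mem_adjoin_simple_self ℚ α) r')
    have hαmem : α ∈ IntermediateField.adjoin ℚ {β} :=
      memlem α ((starRingEnd ℂ) α) a hpa ha hmαz _
        (by rw [h1]; exact pow_mem (IntermediateField.mem_adjoin_simple_self ℚ β) r')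
    exact le_antisymm (IntermediateField.adjoin_simple_le_iff.mpr hαmem)
      (IntermediateField.adjoin_simple_le_iff.mpr hβmem)
  · have h1 : α ^ r' = (starRingEnd ℂ) β ^ r' := by linear_combination h
    have hcβmem : (starRingEnd ℂ) β ∈ IntermediateField.adjoin ℚ {α} :=
      memlem ((starRingEnd ℂ) β) β b hpb (by rw [add_comm]; exact hb)
        (by rw [mul_comm]; exact hmβz) _
        (by rw [← h1]; exact pow_mem (IntermediateField.mem_adjoin_simple_self ℚ α) r')
    have hβmem : β ∈ IntermediateField.adjoin ℚ {α} := by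
      have hβeq : β = (b : ℂ) - (starRingEnd ℂ) β := by linear_combination hb
      rw [hβeq]
      exact sub_mem (IntermediateField.intCast_mem _ b) hcβmem
    have hαmem : α ∈ IntermediateField.adjoin ℚ {β} := by
      refine memlem α ((starRingEnd ℂ) α) a hpa ha hmαz _ ?_
      rw [h1]
      have hcβeq : (starRingEnd ℂ) β = (b : ℂ) - β := by linear_combination hb
      rw [hcβeq]
      exact pow_mem (sub_mem (IntermediateField.intCast_mem _ b)
        (IntermediateField.mem_adjoin_simple_self ℚ β)) r'
    exact le_antisymm (IntermediateField.adjoin_simple_le_iff.mpr hαmem)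
      (IntermediateField.adjoin_simple_le_iff.mpr hβmem)
end

section
/- Let q = p^e, F = ℚ(α) an imaginary quadratic field where α is a Weil q-integer of weight 1 with p ∤ Tr(α). Then for every r ≥ 1, the polynomial (1 − α^r t)(1 − conj(α)^r t) ∈ ℤ[t] is irreducible over ℚ, i.e., α^r ∉ ℚ. -/
/-- For `α` a Weil `q`-integer of weight 1 with `p ∤ Tr(α)` (so `ℚ(α)` is
imaginary quadratic), for every `r ≥ 1` the polynomial `(1 - α^r t)(1 - conj(α)^r t)` is
irreducible over `ℚ`, i.e. `α ^ r ∉ ℚ` (equivalently, its minimal polynomial over `ℚ`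
has degree 2). -/
theorem stmt17 (p e : ℕ) (hp : p.Prime) (he : 1 ≤ e) (q : ℕ) (hq : q = p ^ e)
    (α : ℂ) (hα : IsWeilInt q 1 α)
    (htr : ∃ t : ℤ, α + (starRingEnd ℂ) α = (t : ℂ) ∧ ¬ ((p : ℤ) ∣ t)) :
    ∀ r : ℕ, 1 ≤ r →
      (∀ a : ℚ, (a : ℂ) ≠ α ^ r) ∧ (minpoly ℚ (α ^ r)).natDegree = 2 := by
  obtain ⟨hint, habs⟩ := hα
  obtain ⟨t, htα, htp⟩ := htr
  haveI : Fact p.Prime := ⟨hp⟩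
  have hpz : Prime (p : ℤ) := Nat.prime_iff_prime_int.mp hp
  have habsα : ‖α‖ = (q : ℝ) ^ ((1:ℝ) / 2) := by
    have := habs α (minpoly.aeval ℚ α)
    simpa using this
  have hq0 : (0:ℝ) ≤ (q : ℝ) := Nat.cast_nonneg q
  have hsq : ((q : ℝ) ^ ((1:ℝ)/2)) ^ 2 = (q : ℝ) := by
    rw [← Real.rpow_natCast ((q : ℝ) ^ ((1:ℝ)/2)) 2, ← Real.rpow_mul hq0]
    norm_num
  have hnormSq : α * (starRingEnd ℂ) α = (q : ℂ) := by
    rw [Complex.mul_conj]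
    have h2 : Complex.normSq α = (q : ℝ) := by
      rw [← Complex.sq_norm, habsα, hsq]
    rw [h2]
    norm_cast
  have hconj : (starRingEnd ℂ) α = (t : ℂ) - α := by linear_combination htα
  have hquad : α ^ 2 = (t : ℂ) * α - (q : ℂ) := by
    have h : α * ((t : ℂ) - α) = (q : ℂ) := by rw [← hconj]; exact hnormSq
    linear_combination -h
  -- α is not real
  have him : α.im ≠ 0 := by
    intro h0
    have hreal : (starRingEnd ℂ) α = α := Complex.conj_eq_iff_im.mpr h0
    have h2α : (2 : ℂ) * α = (t : ℂ) := by rw [← htα, hreal]; ring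
    have haa : α * α = (q : ℂ) := by rw [← hnormSq, hreal]
    have ht2 : (t : ℂ) ^ 2 = 4 * (q : ℂ) := by
      linear_combination (-((t:ℂ) + 2 * α)) * h2α + 4 * haa
    have ht2' : t ^ 2 = 4 * (q : ℤ) := by exact_mod_cast ht2
    have hdvd : (p : ℤ) ∣ t ^ 2 := by
      rw [ht2', hq]
      exact Dvd.dvd.mul_left (dvd_pow_self _ (by omega) |>.natCast) 4
    exact htp (hpz.dvd_of_dvd_pow hdvd)
  have hqp : ((q : ℤ) : ZMod p) = 0 := by
    rw [hq]
    push_cast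
    rw [ZMod.natCast_self]
    exact zero_pow (by omega : e ≠ 0)
  -- key induction
  have key : ∀ r : ℕ, 1 ≤ r → ∃ b c : ℤ, α ^ r = (b : ℂ) + (c : ℂ) * α ∧
      (b : ZMod p) = 0 ∧ (c : ZMod p) = (t : ZMod p) ^ (r - 1) := by
    intro r hr
    induction r, hr using Nat.le_induction with
    | base => exact ⟨0, 1, by push_cast; ring, by simp, by simp⟩
    | succ n hn ih =>
      obtain ⟨b, c, hbc, hb0, hc⟩ := ih
      refine ⟨-c * q, b + c * t, ?_, ?_, ?_⟩
      · have h : α ^ (n + 1) = α ^ n * α := by ring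
        rw [h, hbc]
        push_cast
        linear_combination (c : ℂ) * hquad
      · push_cast
        push_cast at hqp
        rw [hqp]
        ring
      · push_cast
        rw [hb0, hc, zero_add, ← pow_succ]
        congr 1
        omega
  have htz : (t : ZMod p) ≠ 0 := by
    rwa [Ne, ZMod.intCast_zmod_eq_zero_iff_dvd]
  intro r hr
  obtain ⟨b, c, hbc, hb0, hc⟩ := key r hr
  have hc0 : c ≠ 0 := by
    intro h
    apply pow_ne_zero (r - 1) htz
    rw [← hc, h]
    simp
  have himr : (α ^ r).im ≠ 0 := by
    rw [hbc]
    simp only [Complex.add_im, Complex.mul_im, Complex.intCast_im, Complex.intCast_re]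
    have h : (0:ℝ) + ((c:ℝ) * α.im + 0 * α.re) = (c:ℝ) * α.im := by ring
    rw [h]
    exact mul_ne_zero (by exact_mod_cast hc0) him
  have hirr : ∀ a : ℚ, (a : ℂ) ≠ α ^ r := by
    intro a ha
    apply himr
    rw [← ha]
    simp
  refine ⟨hirr, ?_⟩
  have hintz : IsIntegral ℤ (α ^ r) := hint.pow r
  have hintq : IsIntegral ℚ (α ^ r) := hintz.tower_top
  have hw : (starRingEnd ℂ) (α ^ r) = (b : ℂ) + (c : ℂ) * ((t:ℂ) - α) := by
    rw [hbc]
    simp [hconj]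
  have hsum : α ^ r + (starRingEnd ℂ) (α ^ r) = ((2 * b + c * t : ℤ) : ℂ) := by
    rw [hw, hbc]; push_cast; ring
  have hprod : α ^ r * (starRingEnd ℂ) (α ^ r) = ((q : ℂ)) ^ r := by
    rw [map_pow, ← mul_pow, hnormSq]
  have hroot : (α ^ r) ^ 2 - ((2 * b + c * t : ℤ) : ℂ) * α ^ r + (q : ℂ) ^ r = 0 := by
    linear_combination (α ^ r) * hsum - hprod
  set P : Polynomial ℚ := Polynomial.X ^ 2 -
      Polynomial.C ((2 * b + c * t : ℤ) : ℚ) * Polynomial.X +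
      Polynomial.C ((q : ℚ) ^ r) with hP
  have hPz : Polynomial.aeval (α ^ r) P = 0 := by
    rw [hP]
    simp only [map_add, map_sub, map_pow, map_mul, Polynomial.aeval_X, Polynomial.aeval_C,
      eq_ratCast]
    push_cast
    push_cast at hroot
    linear_combination hroot
  have hPdeg : P.natDegree = 2 := by
    rw [hP]
    compute_degree!
  have hPne : P ≠ 0 := by
    intro h
    rw [h] at hPdeg
    simp at hPdeg
  have hle : (minpoly ℚ (α ^ r)).natDegree ≤ 2 := by
    have := Polynomial.natDegree_le_of_dvd (minpoly.dvd ℚ (α ^ r) hPz) hPne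
    omega
  have hge : 2 ≤ (minpoly ℚ (α ^ r)).natDegree := by
    rw [minpoly.two_le_natDegree_iff hintq]
    rintro ⟨a, ha⟩
    exact hirr a (by simpa using ha)
  omega
end
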